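/- Let N, M be natural numbers, K̄_full ∈ ℝ^{(N+M)×(N+M)} symmetric positive definite with top-left N×N block K̄ and bottom-left M×N block B, let y ∈ ℝ^N, γ > 0, and let V_i : ℝ → ℝ for i = 1, …, N be arbitrary functions. Suppose ĉ ∈ ℝ^N is the unique global minimizer of c ↦ Σ_{i=1}^N V_i(y_i − (K̄ c)_i) + γ cᵀ K̄ c. Then the vector f̂ ∈ ℝ^{N+M} whose first N coordinates are K̄ ĉ and whose last M coordinates are B ĉ is the unique global minimizer over f ∈ ℝ^{N+M} of J(f) = Σ_{i=1}^N V_i(y_i − f_i) + γ fᵀ K̄_full⁻¹ f. -/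

import Mathlib

open Matrix

/-- `x` is the unique global minimizer of `f`. -/
def IsUniqueGlobalMin {α : Type*} (f : α → ℝ) (x : α) : Prop :=
  (∀ z, f x ≤ f z) ∧ ∀ z, f z = f x → z = x

section aux

variable {N M : ℕ} (Kfull : Matrix (Fin N ⊕ Fin M) (Fin N ⊕ Fin M) ℝ)

lemma aux_mulVec_elim (c : Fin N → ℝ) :
    Kfull *ᵥ (Sum.elim c 0) =
      Sum.elim ((Kfull.submatrix Sum.inl Sum.inl) *ᵥ c)
        ((Kfull.submatrix Sum.inr Sum.inl) *ᵥ c) := by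
  funext x
  cases x with
  | inl i => simp [mulVec, dotProduct, Fintype.sum_sum_type, submatrix]
  | inr j => simp [mulVec, dotProduct, Fintype.sum_sum_type, submatrix]

lemma aux_dot_elim (c : Fin N → ℝ) (f : Fin N ⊕ Fin M → ℝ) :
    (Sum.elim c 0) ⬝ᵥ f = c ⬝ᵥ (fun i => f (Sum.inl i)) := by
  simp [dotProduct, Fintype.sum_sum_type]

lemma aux_Kbar_posDef (hpd : Kfull.PosDef) :
    (Kfull.submatrix Sum.inl Sum.inl).PosDef := by
  refine PosDef.of_dotProduct_mulVec_pos ?_ ?_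
  · have h := hpd.1
    unfold Matrix.IsHermitian at *
    funext i j
    have := congrFun (congrFun h (Sum.inl j)) (Sum.inl i)
    simpa [conjTranspose, submatrix] using this.symm
  · intro x hx
    have hx' : Sum.elim x (0 : Fin M → ℝ) ≠ 0 := by
      intro h
      apply hx
      funext i
      exact congrFun h (Sum.inl i)
    have := hpd.dotProduct_mulVec_pos hx'
    rw [aux_mulVec_elim] at this
    simpa [dotProduct, Fintype.sum_sum_type] using this

/-- Key quadratic identity. -/
lemma aux_quad (hpd : Kfull.PosDef) (c : Fin N → ℝ) (f : Fin N ⊕ Fin M → ℝ)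
    (hc : (Kfull.submatrix Sum.inl Sum.inl) *ᵥ c = fun i => f (Sum.inl i)) :
    f ⬝ᵥ (Kfull⁻¹ *ᵥ f) =
      c ⬝ᵥ ((Kfull.submatrix Sum.inl Sum.inl) *ᵥ c)
        + (f - Kfull *ᵥ (Sum.elim c 0)) ⬝ᵥ (Kfull⁻¹ *ᵥ (f - Kfull *ᵥ (Sum.elim c 0))) := by
  set e : Fin N ⊕ Fin M → ℝ := Sum.elim c 0 with he
  set u : Fin N ⊕ Fin M → ℝ := Kfull *ᵥ e with hu
  have hKinvu : Kfull⁻¹ *ᵥ u = e := by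
    rw [hu, mulVec_mulVec, nonsing_inv_mul _ (isUnit_iff_ne_zero.mpr hpd.det_pos.ne'), one_mulVec]
  have hherm : Kfull⁻¹ᵀ = Kfull⁻¹ := by
    have := hpd.inv.1
    rw [← conjTranspose_eq_transpose_of_trivial]; exact this
  have hcross : u ⬝ᵥ (Kfull⁻¹ *ᵥ f) = f ⬝ᵥ (Kfull⁻¹ *ᵥ u) := by
    rw [Matrix.dotProduct_mulVec, ← Matrix.mulVec_transpose, hherm, dotProduct_comm]
  have hfe : f ⬝ᵥ e = c ⬝ᵥ ((Kfull.submatrix Sum.inl Sum.inl) *ᵥ c) := by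
    rw [dotProduct_comm, he, aux_dot_elim, hc]
  have hue : u ⬝ᵥ e = c ⬝ᵥ ((Kfull.submatrix Sum.inl Sum.inl) *ᵥ c) := by
    rw [dotProduct_comm, he, aux_dot_elim]
    rw [hu, he, aux_mulVec_elim]
    simp
  have expand : (f - u) ⬝ᵥ (Kfull⁻¹ *ᵥ (f - u))
      = f ⬝ᵥ (Kfull⁻¹ *ᵥ f) - f ⬝ᵥ (Kfull⁻¹ *ᵥ u) - u ⬝ᵥ (Kfull⁻¹ *ᵥ f)
        + u ⬝ᵥ (Kfull⁻¹ *ᵥ u) := by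
    simp only [mulVec_sub, sub_dotProduct, dotProduct_sub]
    ring
  rw [expand, hcross, hKinvu, hfe, hue]
  ring

end aux

theorem map_estimate_is_rkhs_estimate {N M : ℕ}
    (Kfull : Matrix (Fin N ⊕ Fin M) (Fin N ⊕ Fin M) ℝ)
    (hpd : Kfull.PosDef)
    (y : Fin N → ℝ) (γ : ℝ) (hγ : 0 < γ) (V : Fin N → ℝ → ℝ)
    (chat : Fin N → ℝ)
    (hchat : IsUniqueGlobalMin
      (fun c : Fin N → ℝ =>
        ∑ i, V i (y i - ((Kfull.submatrix Sum.inl Sum.inl) *ᵥ c) i)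
          + γ * (c ⬝ᵥ ((Kfull.submatrix Sum.inl Sum.inl) *ᵥ c))) chat) :
    IsUniqueGlobalMin
      (fun f : Fin N ⊕ Fin M → ℝ =>
        ∑ i, V i (y i - f (Sum.inl i)) + γ * (f ⬝ᵥ (Kfull⁻¹ *ᵥ f)))
      (Sum.elim ((Kfull.submatrix Sum.inl Sum.inl) *ᵥ chat)
        ((Kfull.submatrix Sum.inr Sum.inl) *ᵥ chat)) := by
  set Kb := Kfull.submatrix Sum.inl Sum.inl with hKb
  have hKbpd : Kb.PosDef := aux_Kbar_posDef Kfull hpd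
  set fhat := Sum.elim (Kb *ᵥ chat) ((Kfull.submatrix Sum.inr Sum.inl) *ᵥ chat) with hfhat
  have hfhat_eq : fhat = Kfull *ᵥ (Sum.elim chat 0) := (aux_mulVec_elim Kfull chat).symm
  have hfhat_inl : (fun i => fhat (Sum.inl i)) = Kb *ᵥ chat := by
    funext i; simp [hfhat]
  -- objective functions
  set obj : (Fin N → ℝ) → ℝ := fun c =>
    ∑ i, V i (y i - (Kb *ᵥ c) i) + γ * (c ⬝ᵥ (Kb *ᵥ c)) with hobj
  set J : (Fin N ⊕ Fin M → ℝ) → ℝ := fun f =>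
    ∑ i, V i (y i - f (Sum.inl i)) + γ * (f ⬝ᵥ (Kfull⁻¹ *ᵥ f)) with hJ
  -- for each f, choose c
  have key : ∀ f : Fin N ⊕ Fin M → ℝ, ∃ c : Fin N → ℝ,
      Kb *ᵥ c = (fun i => f (Sum.inl i)) ∧
      J f = obj c + γ * ((f - Kfull *ᵥ (Sum.elim c 0)) ⬝ᵥ
        (Kfull⁻¹ *ᵥ (f - Kfull *ᵥ (Sum.elim c 0)))) := by
    intro f
    refine ⟨Kb⁻¹ *ᵥ (fun i => f (Sum.inl i)), ?_, ?_⟩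
    · rw [mulVec_mulVec, mul_nonsing_inv _ (isUnit_iff_ne_zero.mpr hKbpd.det_pos.ne'), one_mulVec]
    · have hc : Kb *ᵥ (Kb⁻¹ *ᵥ (fun i => f (Sum.inl i))) = fun i => f (Sum.inl i) := by
        rw [mulVec_mulVec, mul_nonsing_inv _ (isUnit_iff_ne_zero.mpr hKbpd.det_pos.ne'), one_mulVec]
      have hq := aux_quad Kfull hpd (Kb⁻¹ *ᵥ (fun i => f (Sum.inl i))) f hc
      rw [hJ, hobj]
      simp only [← hKb] at hq ⊢
      rw [hq, hc]
      ring
  have hJfhat : J fhat = obj chat := by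
    have hq := aux_quad Kfull hpd chat fhat (by rw [← hKb, hfhat_inl])
    rw [← hfhat_eq] at hq
    simp only [sub_self, ← hKb] at hq
    have hq' : fhat ⬝ᵥ Kfull⁻¹ *ᵥ fhat = chat ⬝ᵥ Kb *ᵥ chat := by
      rw [hq]; simp
    simp only [hJ, hobj, hq', hfhat, Sum.elim_inl]
    rw [← hfhat, hq']
  have quad_nonneg : ∀ v : Fin N ⊕ Fin M → ℝ, 0 ≤ v ⬝ᵥ (Kfull⁻¹ *ᵥ v) := by
    intro v
    have := hpd.inv.posSemidef.dotProduct_mulVec_nonneg v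
    simpa using this
  constructor
  · intro f
    obtain ⟨c, hc, hfeq⟩ := key f
    have h1 : obj chat ≤ obj c := hchat.1 c
    set q := (f - Kfull *ᵥ (Sum.elim c 0)) ⬝ᵥ
        (Kfull⁻¹ *ᵥ (f - Kfull *ᵥ (Sum.elim c 0))) with hqdef
    have h2 : (0:ℝ) ≤ q := quad_nonneg _
    rw [hJfhat, hfeq]
    have := mul_nonneg hγ.le h2
    linarith
  · intro f hf
    obtain ⟨c, hc, hfeq⟩ := key f
    have h1 : obj chat ≤ obj c := hchat.1 c
    set q := (f - Kfull *ᵥ (Sum.elim c 0)) ⬝ᵥ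
        (Kfull⁻¹ *ᵥ (f - Kfull *ᵥ (Sum.elim c 0))) with hqdef
    have h2 : (0:ℝ) ≤ q := quad_nonneg _
    rw [hJfhat, hfeq] at hf
    have h3 := mul_nonneg hγ.le h2
    have h4 : γ * q = 0 := by linarith
    have hq0 : q = 0 := by
      rcases mul_eq_zero.mp h4 with h | h
      · exact absurd h hγ.ne'
      · exact h
    rw [hqdef] at hq0
    have hobjeq : obj c = obj chat := by linarith
    have hcchat : c = chat := hchat.2 c hobjeq
    have hfu : f - Kfull *ᵥ (Sum.elim c 0) = 0 := by
      by_contra hne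
      have := hpd.inv.dotProduct_mulVec_pos hne
      simp only [star_trivial] at this
      exact absurd hq0 (ne_of_gt this)
    have : f = Kfull *ᵥ (Sum.elim c 0) := by
      have := sub_eq_zero.mp hfu; exact this
    rw [this, hcchat, ← hfhat_eq]
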